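/- arXiv:1602.03312 — 2 statements merged into one kernel-verified Lean document; each statement's English description precedes it below -/
import Mathlib

section
/- Let S = {1,...,m} be a finite set and φ : S × S → {±1} a symmetric function. Then there exists n ≤ 2m and a map σ : S → ℤ₂ⁿ such that φ(i,j) = (-1)^⟨σ(i),σ(j)⟩ for all i,j ∈ S, where ⟨·,·⟩ is the standard scalar product on ℤ₂ⁿ (sum of componentwise products, mod 2 determining the sign). -/
/-- sign bit: 0 if φ i j = 1, else 1 (extended by 0 outside range). -/
private def bn (m : ℕ) (φ : Fin m → Fin m → ℤ) (i j : ℕ) : ZMod 2 :=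
  if h : i < m ∧ j < m then (if φ ⟨i, h.1⟩ ⟨j, h.2⟩ = 1 then 0 else 1) else 0

private def un (m : ℕ) (φ : Fin m → Fin m → ℤ) (i : ℕ) : ZMod 2 := 1 + bn m φ i i

private def Ln (m : ℕ) (φ : Fin m → Fin m → ℤ) (i k : ℕ) : ZMod 2 :=
  if k < i then bn m φ i k + un m φ i * un m φ k else 0

private def sg (m : ℕ) (φ : Fin m → Fin m → ℤ) (i k : ℕ) : ZMod 2 :=
  if k < m then (if k = i then 1 else 0) + Ln m φ i k
  else if k = 2 * m - 1 then un m φ i else Ln m φ i (k - m)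

private lemma key (m : ℕ) (φ : Fin m → Fin m → ℤ)
    (hsym : ∀ i j, φ i j = φ j i) (i j : Fin m) :
    (∑ k : Fin (2 * m), sg m φ i.val k.val * sg m φ j.val k.val) = bn m φ i.val j.val := by
  have hm : 0 < m := i.pos
  rw [Fin.sum_univ_eq_sum_range (fun k => sg m φ i.val k * sg m φ j.val k) (2 * m)]
  rw [two_mul, Finset.sum_range_add]
  -- first block
  have h1 : ∑ k ∈ Finset.range m, sg m φ i.val k * sg m φ j.val k
      = ∑ k ∈ Finset.range m,
        ((if k = i.val then 1 else 0) + Ln m φ i.val k)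
        * ((if k = j.val then 1 else 0) + Ln m φ j.val k) := by
    apply Finset.sum_congr rfl
    intro k hk
    rw [Finset.mem_range] at hk
    simp [sg, hk]
  -- second block
  have h2 : ∑ k ∈ Finset.range m, sg m φ i.val (m + k) * sg m φ j.val (m + k)
      = ∑ k ∈ Finset.range m,
        (Ln m φ i.val k * Ln m φ j.val k
          + if m - 1 = k then un m φ i.val * un m φ j.val else 0) := by
    apply Finset.sum_congr rfl
    intro k hk
    rw [Finset.mem_range] at hk
    have hnot : ¬ (m + k < m) := by omega
    rw [sg, sg, if_neg hnot, if_neg hnot]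
    by_cases hk1 : m - 1 = k
    · have hq : m + k = 2 * m - 1 := by omega
      rw [if_pos hq, if_pos hq, if_pos hk1]
      have hLi : Ln m φ i.val k = 0 := by
        rw [Ln, if_neg]; omega
      have hLj : Ln m φ j.val k = 0 := by
        rw [Ln, if_neg]; omega
      rw [hLi, hLj]; ring
    · have hq : ¬ (m + k = 2 * m - 1) := by omega
      rw [if_neg hq, if_neg hq, if_neg hk1]
      have hmm : m + k - m = k := by omega
      rw [hmm]; ring
  rw [h1, h2]
  simp only [add_mul, mul_add, Finset.sum_add_distrib]
  -- evaluate the delta sums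
  have e1 : ∑ k ∈ Finset.range m,
      (if k = i.val then (1:ZMod 2) else 0) * (if k = j.val then 1 else 0)
      = if i.val = j.val then 1 else 0 := by
    have hpt : ∀ k ∈ Finset.range m,
        (if k = i.val then (1:ZMod 2) else 0) * (if k = j.val then 1 else 0)
        = if i.val = k then (if k = j.val then (1:ZMod 2) else 0) else 0 := by
      intro k _
      by_cases h : k = i.val
      · subst h; simp
      · rw [if_neg h, zero_mul,
          if_neg (show ¬((i:ℕ) = k) from fun hh => h hh.symm)]
    rw [Finset.sum_congr rfl hpt, Finset.sum_ite_eq]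
    simp [i.isLt]
  have e2 : ∑ k ∈ Finset.range m,
      (if k = i.val then (1:ZMod 2) else 0) * Ln m φ j.val k = Ln m φ j.val i.val := by
    have hpt : ∀ k ∈ Finset.range m,
        (if k = i.val then (1:ZMod 2) else 0) * Ln m φ j.val k
        = if i.val = k then Ln m φ j.val k else 0 := by
      intro k _
      by_cases h : k = i.val
      · subst h; simp
      · rw [if_neg h, zero_mul,
          if_neg (show ¬((i:ℕ) = k) from fun hh => h hh.symm)]
    rw [Finset.sum_congr rfl hpt, Finset.sum_ite_eq]
    simp [i.isLt]
  have e3 : ∑ k ∈ Finset.range m,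
      Ln m φ i.val k * (if k = j.val then (1:ZMod 2) else 0) = Ln m φ i.val j.val := by
    have hpt : ∀ k ∈ Finset.range m,
        Ln m φ i.val k * (if k = j.val then (1:ZMod 2) else 0)
        = if j.val = k then Ln m φ i.val k else 0 := by
      intro k _
      by_cases h : k = j.val
      · subst h; simp
      · rw [if_neg h, mul_zero,
          if_neg (show ¬((j:ℕ) = k) from fun hh => h hh.symm)]
    rw [Finset.sum_congr rfl hpt, Finset.sum_ite_eq]
    simp [j.isLt]
  have e4 : ∑ k ∈ Finset.range m,
      (if m - 1 = k then un m φ i.val * un m φ j.val else 0)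
      = un m φ i.val * un m φ j.val := by
    rw [Finset.sum_ite_eq]
    simp [Finset.mem_range]; omega
  rw [e1, e2, e3, e4]
  have hbsym : bn m φ i.val j.val = bn m φ j.val i.val := by
    rw [bn, bn]
    have h : i.val < m ∧ j.val < m := ⟨i.isLt, j.isLt⟩
    have h' : j.val < m ∧ i.val < m := ⟨j.isLt, i.isLt⟩
    rw [dif_pos h, dif_pos h']
    rw [hsym ⟨i.val, h.1⟩ ⟨j.val, h.2⟩]
  generalize hs : ∑ k ∈ Finset.range m, Ln m φ i.val k * Ln m φ j.val k = s
  clear hs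
  rcases lt_trichotomy i.val j.val with hlt | heq | hgt
  · have hLij : Ln m φ i.val j.val = 0 := by rw [Ln, if_neg]; omega
    have hLji : Ln m φ j.val i.val = bn m φ j.val i.val + un m φ j.val * un m φ i.val := by
      rw [Ln, if_pos hlt]
    have hij : ¬ (i.val = j.val) := by omega
    rw [hLij, hLji, if_neg hij, hbsym]
    generalize bn m φ j.val i.val = a
    generalize un m φ i.val = x
    generalize un m φ j.val = y
    revert a x y s; decide
  · have hLij : Ln m φ i.val j.val = 0 := by rw [Ln, if_neg]; omega
    have hLji : Ln m φ j.val i.val = 0 := by rw [Ln, if_neg]; omega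
    rw [hLij, hLji, if_pos heq, heq,
      show un m φ (j:ℕ) = 1 + bn m φ (j:ℕ) (j:ℕ) from rfl]
    generalize bn m φ j.val j.val = a
    revert a s; decide
  · have hLji : Ln m φ j.val i.val = 0 := by rw [Ln, if_neg]; omega
    have hLij : Ln m φ i.val j.val = bn m φ i.val j.val + un m φ i.val * un m φ j.val := by
      rw [Ln, if_pos hgt]
    have hij : ¬ (i.val = j.val) := by omega
    rw [hLij, hLji, if_neg hij]
    generalize bn m φ i.val j.val = a
    generalize un m φ i.val = x
    generalize un m φ j.val = y
    revert a x y s; decide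

/-- For any symmetric sign function `φ` on `S = {1,…,m}` there is `n ≤ 2m`
and a map `σ : S → ℤ₂ⁿ` such that `φ(i,j) = (-1)^⟨σ i, σ j⟩`, where `⟨·,·⟩` is the
standard scalar product on `ℤ₂ⁿ = (ZMod 2)ⁿ`. -/
theorem sign_rule_from_Z2n_scalar_product (m : ℕ) (φ : Fin m → Fin m → ℤ)
    (hpm : ∀ i j, φ i j = 1 ∨ φ i j = -1)
    (hsym : ∀ i j, φ i j = φ j i) :
    ∃ (n : ℕ), n ≤ 2 * m ∧ ∃ σ : Fin m → (Fin n → ZMod 2),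
      ∀ i j, φ i j = (-1 : ℤ) ^ ((∑ k, σ i k * σ j k : ZMod 2)).val := by
  refine ⟨2 * m, le_refl _, fun i k => sg m φ i.val k.val, fun i j => ?_⟩
  rw [key m φ hsym i j]
  rw [bn, dif_pos ⟨i.isLt, j.isLt⟩]
  rcases hpm i j with h | h
  · rw [show (⟨i.val, i.isLt⟩ : Fin m) = i from rfl, show (⟨j.val, j.isLt⟩ : Fin m) = j from rfl]
    rw [if_pos h, h]
    rfl
  · rw [show (⟨i.val, i.isLt⟩ : Fin m) = i from rfl, show (⟨j.val, j.isLt⟩ : Fin m) = j from rfl]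
    rw [if_neg (by rw [h]; decide), h]
    rfl
end

section
/- Let (M,A) be a ringed space of ℝ-algebras such that for every open U, every f ∈ A(U), and every m ∈ U there is a unique λ ∈ ℝ with the property that f - λ·1 is not invertible on any open neighborhood of m. Then the assignment ε_U(f)(m) := λ defines a ring morphism ε_U : A(U) → (functions on U), i.e., ε_U(f+g) = ε_U(f) + ε_U(g) and ε_U(fg) = ε_U(f)·ε_U(g). -/
open TopologicalSpace

/-- Let `(M, A)` be a ringed space of `ℝ`-algebras (a presheaf of
commutative `ℝ`-algebras on `M`) such that for every open `U`, every `f ∈ A(U)` and every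
`m ∈ U` there is a unique `λ ∈ ℝ` such that `f - λ·1` is not invertible on any open
neighborhood of `m`. Then `ε_U(f)(m) := λ` defines a ring morphism:
`ε_U(f+g) = ε_U f + ε_U g`, `ε_U(f·g) = ε_U f · ε_U g` (and `ε_U 1 = 1`). -/
theorem base_projection_is_ring_morphism {M : Type*} [TopologicalSpace M]
    (A : Opens M → Type*) [∀ U, CommRing (A U)] [∀ U, Algebra ℝ (A U)]
    (res : ∀ {U V : Opens M}, V ≤ U → A U →ₐ[ℝ] A V)
    (res_refl : ∀ (U : Opens M) (f : A U), res (le_refl U) f = f)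
    (res_comp : ∀ {U V W : Opens M} (h1 : W ≤ V) (h2 : V ≤ U) (f : A U),
      res h1 (res h2 f) = res (h1.trans h2) f)
    (huniq : ∀ (U : Opens M) (f : A U) (m : M), m ∈ U → ∃! lam : ℝ,
      ∀ (W : Opens M) (h : W ≤ U), m ∈ W →
        ¬ IsUnit (res h (f - algebraMap ℝ (A U) lam))) :
    ∃ ε : ∀ U : Opens M, A U → M → ℝ,
      (∀ (U : Opens M) (f : A U) (m : M), m ∈ U → ∀ (W : Opens M) (h : W ≤ U), m ∈ W →
        ¬ IsUnit (res h (f - algebraMap ℝ (A U) (ε U f m)))) ∧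
      (∀ (U : Opens M) (f g : A U) (m : M), m ∈ U →
        ε U (f + g) m = ε U f m + ε U g m) ∧
      (∀ (U : Opens M) (f g : A U) (m : M), m ∈ U →
        ε U (f * g) m = ε U f m * ε U g m) ∧
      (∀ (U : Opens M) (m : M), m ∈ U → ε U 1 m = 1) := by
  classical
  -- `Sing U f m` : f is not invertible on any neighborhood of m inside U
  set Sing : ∀ (U : Opens M), A U → M → Prop := fun U f m =>
    ∀ (W : Opens M) (h : W ≤ U), m ∈ W → ¬ IsUnit (res h f) with hSing
  -- product with a singular element is singular
  have sing_mul : ∀ (U : Opens M) (f g : A U) (m : M), Sing U g m → Sing U (f * g) m := by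
    intro U f g m hg W h hm hu
    rw [map_mul] at hu
    exact hg W h hm (isUnit_of_mul_isUnit_right hu)
  -- 0 is singular at every point of U
  have sing_zero : ∀ (U : Opens M) (m : M), m ∈ U → Sing U 0 m := by
    intro U m hm W h hmW hu
    obtain ⟨lam, hlam, -⟩ := huniq W (0 : A W) m hmW
    have h0 : ¬ IsUnit ((0 : A W) - algebraMap ℝ (A W) lam) := by
      have := hlam W (le_refl W) hmW
      rwa [res_refl] at this
    have hzero : (0 : A W) = 1 := by
      rw [map_zero] at hu; exact isUnit_zero_iff.mp hu
    have : Subsingleton (A W) := subsingleton_of_zero_eq_one hzero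
    exact h0 (isUnit_of_subsingleton _)
  -- sum of singular elements is singular
  have sing_add : ∀ (U : Opens M) (f g : A U) (m : M), m ∈ U →
      Sing U f m → Sing U g m → Sing U (f + g) m := by
    intro U f g m _ hf hg W h hmW hu
    rw [map_add] at hu
    obtain ⟨u, hu⟩ := hu
    set p : A W := res h f * ↑u⁻¹ with hp
    set q : A W := res h g * ↑u⁻¹ with hq
    have hpq : p + q = 1 := by
      rw [hp, hq, ← add_mul, ← hu]
      exact u.mul_inv
    have hps : Sing W p m := by
      intro W' h' hm' hu'
      rw [map_mul] at hu'
      have : IsUnit (res h' (res h f)) := isUnit_of_mul_isUnit_left hu'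
      rw [res_comp] at this
      exact hf W' (h'.trans h) hm' this
    have hqs : Sing W q m := by
      intro W' h' hm' hu'
      rw [map_mul] at hu'
      have : IsUnit (res h' (res h g)) := isUnit_of_mul_isUnit_left hu'
      rw [res_comp] at this
      exact hg W' (h'.trans h) hm' this
    obtain ⟨lam, -, hlu⟩ := huniq W q m hmW
    have h0 : (0 : ℝ) = lam := by
      apply hlu
      intro W' h' hm'
      rw [map_zero, sub_zero]
      exact hqs W' h' hm'
    have h1 : (1 : ℝ) = lam := by
      apply hlu
      intro W' h' hm' hu'
      have hq1 : q - algebraMap ℝ (A W) 1 = -p := by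
        rw [map_one, ← hpq]; ring
      rw [hq1, map_neg] at hu'
      have := hu'.neg
      rw [neg_neg] at this
      exact hps W' h' hm' this
    exact one_ne_zero (h1.trans h0.symm)
  -- define ε
  refine ⟨fun U f m => if h : m ∈ U then (huniq U f m h).choose else 0, ?_, ?_, ?_, ?_⟩ <;>
    [skip; skip; skip; skip]
  case _ =>
    intro U f m hm W h hmW
    dsimp only
    rw [dif_pos hm]
    exact (huniq U f m hm).choose_spec.1 W h hmW
  all_goals
    intro U
  · intro f g m hm
    dsimp only
    rw [dif_pos hm, dif_pos hm, dif_pos hm]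
    set a := (huniq U f m hm).choose with ha
    set b := (huniq U g m hm).choose with hb
    have hfa : Sing U (f - algebraMap ℝ (A U) a) m := (huniq U f m hm).choose_spec.1
    have hgb : Sing U (g - algebraMap ℝ (A U) b) m := (huniq U g m hm).choose_spec.1
    have hsum : Sing U ((f + g) - algebraMap ℝ (A U) (a + b)) m := by
      have heq : (f + g) - algebraMap ℝ (A U) (a + b)
          = (f - algebraMap ℝ (A U) a) + (g - algebraMap ℝ (A U) b) := by
        rw [map_add]; ring
      rw [heq]
      exact sing_add U _ _ m hm hfa hgb
    exact ((huniq U (f + g) m hm).choose_spec.2 (a + b) hsum).symm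
  · intro f g m hm
    dsimp only
    rw [dif_pos hm, dif_pos hm, dif_pos hm]
    set a := (huniq U f m hm).choose with ha
    set b := (huniq U g m hm).choose with hb
    have hfa : Sing U (f - algebraMap ℝ (A U) a) m := (huniq U f m hm).choose_spec.1
    have hgb : Sing U (g - algebraMap ℝ (A U) b) m := (huniq U g m hm).choose_spec.1
    have hprod : Sing U ((f * g) - algebraMap ℝ (A U) (a * b)) m := by
      have heq : (f * g) - algebraMap ℝ (A U) (a * b)
          = f * (g - algebraMap ℝ (A U) b)
            + algebraMap ℝ (A U) b * (f - algebraMap ℝ (A U) a) := by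
        rw [map_mul]; ring
      rw [heq]
      exact sing_add U _ _ m hm (sing_mul U _ _ m hgb) (sing_mul U _ _ m hfa)
    exact ((huniq U (f * g) m hm).choose_spec.2 (a * b) hprod).symm
  · intro m hm
    dsimp only
    rw [dif_pos hm]
    have hone : Sing U ((1 : A U) - algebraMap ℝ (A U) 1) m := by
      rw [map_one, sub_self]
      exact sing_zero U m hm
    exact ((huniq U (1 : A U) m hm).choose_spec.2 1 hone).symm
end
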